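/- arXiv:math/0406029 — 2 statements merged into one kernel-verified Lean document; each statement's English description precedes it below -/
import Mathlib

section
/- For natural numbers q, k, ℓ with ℓ ≤ k ≤ q, the double sum Σ_{j=ℓ}^{k} Σ_{i=0}^{q-k} C(k+i-j, k-j) · C(q-k-i+j-ℓ, j-ℓ) equals (k-ℓ+1) · C(q-ℓ+1, k-ℓ+1). -/
lemma key_vandermonde : ∀ b a n : ℕ,
    ∑ i ∈ Finset.range (n + 1), Nat.choose (a + i) a * Nat.choose (b + (n - i)) b
      = Nat.choose (a + b + n + 1) (a + b + 1) := by
  intro b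
  induction b with
  | zero =>
    intro a n
    induction n with
    | zero => simp
    | succ n ihn =>
      rw [Finset.sum_range_succ]
      have h1 : ∀ i ∈ Finset.range (n + 1),
          Nat.choose (a + i) a * Nat.choose (0 + (n + 1 - i)) 0
            = Nat.choose (a + i) a * Nat.choose (0 + (n - i)) 0 := by
        intro i hi; simp
      rw [Finset.sum_congr rfl h1, ihn]
      simp only [Nat.choose_zero_right, mul_one, Nat.add_zero, Nat.sub_self]
      rw [show a + (n + 1) = a + n + 1 from by omega,
        show a + n + 1 + 1 = (a + n + 1) + 1 from rfl,
        Nat.choose_succ_succ' (a + n + 1) a]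
      exact Nat.add_comm _ _
  | succ b ih =>
    intro a n
    induction n with
    | zero => simp
    | succ n ihn =>
      rw [Finset.sum_range_succ]
      have h1 : ∀ i ∈ Finset.range (n + 1),
          Nat.choose (a + i) a * Nat.choose (b + 1 + (n + 1 - i)) (b + 1)
            = Nat.choose (a + i) a * Nat.choose (b + 1 + (n - i)) (b + 1)
              + Nat.choose (a + i) a * Nat.choose (b + (n + 1 - i)) b := by
        intro i hi
        rw [Finset.mem_range] at hi
        have e : b + 1 + (n + 1 - i) = (b + 1 + (n - i)) + 1 := by omega
        have e2 : b + (n + 1 - i) = b + 1 + (n - i) := by omega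
        rw [e, Nat.choose_succ_succ', e2, Nat.mul_add, Nat.add_comm (_ * _)]
      rw [Finset.sum_congr rfl h1, Finset.sum_add_distrib, ihn]
      have h2 := ih a (n + 1)
      rw [Finset.sum_range_succ] at h2
      simp only [Nat.sub_self, Nat.add_zero, Nat.choose_self, mul_one] at h2 ⊢
      rw [add_assoc, h2]
      rw [show a + (b + 1) + (n + 1) + 1 = (a + b + n + 2) + 1 from by ring,
        show a + (b + 1) + 1 = (a + b + 1) + 1 from by ring,
        show a + (b + 1) + n + 1 = a + b + n + 2 from by ring,
        show a + b + (n + 1) + 1 = a + b + n + 2 from by ring,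
        Nat.choose_succ_succ' (a + b + n + 2) (a + b + 1)]
      exact Nat.add_comm _ _

/-- `Σ_{j=ℓ}^{k} Σ_{i=0}^{q-k} C(k+i-j, k-j)·C(q-k-i+j-ℓ, j-ℓ) = (k-ℓ+1)·C(q-ℓ+1, k-ℓ+1)`
for `ℓ ≤ k ≤ q`. -/
theorem double_binomial_sum (q k ℓ : ℕ) (hlk : ℓ ≤ k) (hkq : k ≤ q) :
    ∑ j ∈ Finset.Icc ℓ k, ∑ i ∈ Finset.range (q - k + 1),
        Nat.choose (k + i - j) (k - j) * Nat.choose (q - k - i + j - ℓ) (j - ℓ)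
      = (k - ℓ + 1) * Nat.choose (q - ℓ + 1) (k - ℓ + 1) := by
  have hmain : ∀ j ∈ Finset.Icc ℓ k,
      ∑ i ∈ Finset.range (q - k + 1),
          Nat.choose (k + i - j) (k - j) * Nat.choose (q - k - i + j - ℓ) (j - ℓ)
        = Nat.choose (q - ℓ + 1) (k - ℓ + 1) := by
    intro j hj
    rw [Finset.mem_Icc] at hj
    have h1 : ∀ i ∈ Finset.range (q - k + 1),
        Nat.choose (k + i - j) (k - j) * Nat.choose (q - k - i + j - ℓ) (j - ℓ)
          = Nat.choose ((k - j) + i) (k - j)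
              * Nat.choose ((j - ℓ) + (q - k - i)) (j - ℓ) := by
      intro i hi
      rw [Finset.mem_range] at hi
      congr 1 <;> congr 1 <;> omega
    rw [Finset.sum_congr rfl h1, key_vandermonde (j - ℓ) (k - j) (q - k)]
    congr 1 <;> omega
  rw [Finset.sum_congr rfl hmain, Finset.sum_const, Nat.card_Icc, smul_eq_mul]
  congr 1
  omega
end

section
/- For natural numbers q, t with 1 ≤ t ≤ q, and integers n, d, the sum Σ_{j=t}^{q} j·(-1)^{j-1}·d^{j-t}·C(n+1, q-j)·C(j-1, j-t) equals -t·α(q, q-t), where α(q, q-t) = (-1)^q Σ_{ℓ=0}^{q-t} (-1)^ℓ d^{q-t-ℓ} C(q-ℓ, q-t-ℓ) C(n+1, ℓ). -/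
lemma key_nat (t j : ℕ) (ht : 1 ≤ t) (htj : t ≤ j) :
    j * Nat.choose (j - 1) (j - t) = t * Nat.choose j (j - t) := by
  obtain ⟨t', rfl⟩ := Nat.exists_eq_add_of_le ht
  obtain ⟨j', rfl⟩ := Nat.exists_eq_add_of_le htj
  have h1 : 1 + t' + j' - 1 = t' + j' := by omega
  have h2 : 1 + t' + j' - (1 + t') = j' := by omega
  rw [h1, h2]
  have hs : Nat.choose (t' + j') j' = Nat.choose (t' + j') t' := by
    rw [← Nat.choose_symm (by omega : t' ≤ t' + j')]; congr 1; omega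
  have hs2 : Nat.choose (1 + t' + j') j' = Nat.choose (1 + t' + j') (t' + 1) := by
    rw [← Nat.choose_symm (by omega : t' + 1 ≤ 1 + t' + j')]; congr 1; omega
  rw [hs, hs2]
  have := Nat.add_one_mul_choose_eq (t' + j') t'
  rw [show t' + j' + 1 = 1 + t' + j' from by omega] at this
  rw [this]; ring

/-- `Σ_{j=t}^{q} j(-1)^{j-1} d^{j-t} C(n+1,q-j) C(j-1,j-t) = -t·α(q, q-t)`. -/
theorem div_coefficient_sum (n q t : ℕ) (d : ℤ) (ht1 : 1 ≤ t) (htq : t ≤ q) :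
    ∑ j ∈ Finset.Icc t q,
        (j : ℤ) * (-1 : ℤ) ^ (j - 1) * d ^ (j - t) * (Nat.choose (n + 1) (q - j) : ℤ) *
          (Nat.choose (j - 1) (j - t) : ℤ)
      = -(t : ℤ) * ((-1 : ℤ) ^ q * ∑ ℓ ∈ Finset.range (q - t + 1),
          (-1 : ℤ) ^ ℓ * d ^ (q - t - ℓ) * (Nat.choose (q - ℓ) (q - t - ℓ) : ℤ) *
            (Nat.choose (n + 1) ℓ : ℤ)) := by
  rw [Finset.mul_sum, Finset.mul_sum]
  refine Finset.sum_nbij' (fun j => q - j) (fun ℓ => q - ℓ) ?_ ?_ ?_ ?_ ?_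
  · intro a ha
    simp only [Finset.mem_Icc] at ha
    simp only [Finset.mem_range]
    omega
  · intro a ha
    simp only [Finset.mem_range] at ha
    simp only [Finset.mem_Icc]
    omega
  · intro a ha
    simp only [Finset.mem_Icc] at ha
    show q - (q - a) = a
    omega
  · intro a ha
    simp only [Finset.mem_range] at ha
    show q - (q - a) = a
    omega
  · intro j hj
    simp only [Finset.mem_Icc] at hj
    obtain ⟨hj1, hj2⟩ := hj
    rw [show q - (q - j) = j from by omega, show q - t - (q - j) = j - t from by omega]
    have hk : (j : ℤ) * (Nat.choose (j - 1) (j - t) : ℤ)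
        = (t : ℤ) * (Nat.choose j (j - t) : ℤ) := by
      exact_mod_cast key_nat t j ht1 hj1
    have h1 : (-1 : ℤ) ^ q * (-1 : ℤ) ^ (q - j) = (-1 : ℤ) ^ j := by
      rw [← pow_add, show q + (q - j) = 2 * (q - j) + j from by omega, pow_add, pow_mul]
      simp
    have h2 : (-1 : ℤ) ^ (j - 1) = -(-1 : ℤ) ^ j := by
      have h := pow_succ (-1 : ℤ) (j - 1)
      rw [show j - 1 + 1 = j from by omega] at h
      rw [h]; ring
    linear_combination ((-1 : ℤ) ^ (j - 1) * d ^ (j - t) * (Nat.choose (n + 1) (q - j) : ℤ)) * hk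
      + ((t : ℤ) * d ^ (j - t) * (Nat.choose j (j - t) : ℤ) * (Nat.choose (n + 1) (q - j) : ℤ)) * h1
      + ((t : ℤ) * d ^ (j - t) * (Nat.choose j (j - t) : ℤ) * (Nat.choose (n + 1) (q - j) : ℤ)) * h2
end
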